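/- For an integer b ≥ 2, let M1 be the presented group on generators ρ0, ρ1, ρ2 with relation set {ρ0^2, ρ1^2, ρ2^2, (ρ0ρ1)^4, (ρ1ρ2)^4, (ρ0ρ2)^2, (ρ1ρ0ρ1ρ2)^b}. Then M1 has order 8b^2, and in M1 the images of ρ0, ρ1, ρ2 and ρ0ρ2 have order exactly 2, the images of ρ0ρ1 and ρ1ρ2 have order exactly 4, and the image of ρ1ρ0ρ1ρ2 has order exactly b. -/

import Mathlib

set_option maxRecDepth 10000

section Helpers

variable {M : Type*} [Monoid M]

lemma pow_mod_eq {n : ℕ} (a : M) (h : a ^ n = 1) (m : ℕ) : a ^ (m % n) = a ^ m := by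
  conv_rhs => rw [← Nat.div_add_mod m n, pow_add, pow_mul, h, one_pow, one_mul]

lemma pow_val_add {n : ℕ} [NeZero n] (a : M) (h : a ^ n = 1) (i j : ZMod n) :
    a ^ (i + j).val = a ^ i.val * a ^ j.val := by
  rw [ZMod.val_add, pow_mod_eq a h, pow_add]

lemma pow_eq_of_cast_eq {n : ℕ} [NeZero n] (a : M) (h : a ^ n = 1) {m k : ℕ}
    (hmk : (m : ZMod n) = (k : ZMod n)) : a ^ m = a ^ k := by
  rw [← pow_mod_eq a h m, ← pow_mod_eq a h k]
  rw [ZMod.natCast_eq_natCast_iff] at hmk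
  rw [hmk]

/-- Lift map from a dihedral group of order 8. -/
def dlift (ρ σ : M) : DihedralGroup 4 → M
  | .r i => ρ ^ i.val
  | .sr i => σ * ρ ^ i.val

lemma dlift_r (ρ σ : M) (i : ZMod 4) : dlift ρ σ (.r i) = ρ ^ i.val := rfl
lemma dlift_sr (ρ σ : M) (i : ZMod 4) : dlift ρ σ (.sr i) = σ * ρ ^ i.val := rfl

lemma dlift_mul (ρ σ : M) (h4 : ρ ^ 4 = 1) (h2 : σ * σ = 1) (hc : ρ * σ = σ * ρ ^ 3) :
    ∀ d e : DihedralGroup 4, dlift ρ σ (d * e) = dlift ρ σ d * dlift ρ σ e := by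
  have key : ∀ k : ℕ, ρ ^ k * σ = σ * ρ ^ (3 * k) := by
    intro k
    induction k with
    | zero => simp
    | succ k ih =>
        rw [pow_succ, mul_assoc, hc, ← mul_assoc, ih, mul_assoc, ← pow_add]
        ring_nf
  have hz : (4 : ZMod 4) = 0 := by decide
  intro d e
  cases d with
  | r i => cases e with
    | r j =>
        show ρ ^ (i + j).val = ρ ^ i.val * ρ ^ j.val
        exact pow_val_add ρ h4 i j
    | sr j =>
        show σ * ρ ^ (j - i).val = ρ ^ i.val * (σ * ρ ^ j.val)
        rw [← mul_assoc, key i.val, mul_assoc, ← pow_add]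
        congr 1
        apply pow_eq_of_cast_eq ρ h4
        push_cast
        rw [ZMod.natCast_val, ZMod.natCast_val, ZMod.natCast_val, ZMod.cast_id, ZMod.cast_id,
          ZMod.cast_id]
        linear_combination (-(i : ZMod 4)) * hz
  | sr i => cases e with
    | r j =>
        show σ * ρ ^ (i + j).val = σ * ρ ^ i.val * ρ ^ j.val
        rw [mul_assoc, pow_val_add ρ h4 i j]
    | sr j =>
        show ρ ^ (j - i).val = σ * ρ ^ i.val * (σ * ρ ^ j.val)
        rw [mul_assoc, ← mul_assoc (ρ ^ i.val), key i.val, ← mul_assoc, ← mul_assoc, h2,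
          one_mul, ← pow_add]
        apply pow_eq_of_cast_eq ρ h4
        push_cast
        rw [ZMod.natCast_val, ZMod.natCast_val, ZMod.natCast_val, ZMod.cast_id, ZMod.cast_id,
          ZMod.cast_id]
        linear_combination (-(i : ZMod 4)) * hz

end Helpers
section Concrete

variable (b : ℕ)

abbrev V := Multiplicative (ZMod b × ZMod b)

def rotM : MulAut (V b) where
  toFun p := .ofAdd (-(p.toAdd.2), p.toAdd.1)
  invFun p := .ofAdd (p.toAdd.2, -(p.toAdd.1))
  left_inv p := by
    simp only [toAdd_ofAdd, neg_neg, ofAdd_toAdd]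
    rfl
  right_inv p := by
    simp only [toAdd_ofAdd, neg_neg, ofAdd_toAdd]
    rfl
  map_mul' p q := by
    apply Multiplicative.toAdd.injective
    simp only [toAdd_ofAdd, toAdd_mul, Prod.fst_add, Prod.snd_add,
      Prod.mk_add_mk, neg_add]

def refM : MulAut (V b) where
  toFun p := .ofAdd (p.toAdd.2, p.toAdd.1)
  invFun p := .ofAdd (p.toAdd.2, p.toAdd.1)
  left_inv p := rfl
  right_inv p := rfl
  map_mul' p q := rfl

@[simp] lemma rotM_apply (p : ZMod b × ZMod b) :
    rotM b (.ofAdd p) = .ofAdd (-(p.2), p.1) := rfl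

@[simp] lemma refM_apply (p : ZMod b × ZMod b) :
    refM b (.ofAdd p) = .ofAdd (p.2, p.1) := rfl

lemma rotM_pow4 : (rotM b) ^ 4 = 1 := by
  refine MulEquiv.ext fun p => ?_
  show (rotM b) ((rotM b) ((rotM b) ((rotM b) p))) = p
  apply Multiplicative.toAdd.injective
  simp [rotM]

lemma refM_sq : (refM b) * (refM b) = 1 := by
  refine MulEquiv.ext fun p => ?_
  show (refM b) ((refM b) p) = p
  rfl

lemma rot_ref : (rotM b) * (refM b) = (refM b) * (rotM b) ^ 3 := by
  refine MulEquiv.ext fun p => ?_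
  show (rotM b) ((refM b) p) = (refM b) ((rotM b) ((rotM b) ((rotM b) p)))
  apply Multiplicative.toAdd.injective
  simp [rotM, refM]
  rfl

def phi : DihedralGroup 4 →* MulAut (V b) where
  toFun := dlift (rotM b) (refM b)
  map_one' := by
    show (rotM b) ^ (0 : ZMod 4).val = 1
    rfl
  map_mul' := dlift_mul _ _ (rotM_pow4 b) (refM_sq b) (rot_ref b)

abbrev GG := SemidirectProduct (V b) (DihedralGroup 4) (phi b)

end Concrete
section Gens

variable (b : ℕ)

open DihedralGroup SemidirectProduct

def R0 : GG b := ⟨.ofAdd (1, 0), .sr 3⟩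
def R1 : GG b := ⟨.ofAdd (0, 0), .sr 0⟩
def R2 : GG b := ⟨.ofAdd (0, 0), .sr 1⟩

@[simp] lemma phi_sr3 (p : ZMod b × ZMod b) :
    phi b (.sr 3) (.ofAdd p) = .ofAdd (-p.1, p.2) := by
  show (refM b * (rotM b) ^ (3 : ZMod 4).val) (.ofAdd p) = _
  have h : (3 : ZMod 4).val = 3 := rfl
  rw [h]
  simp only [pow_succ, pow_zero, one_mul, MulAut.mul_apply, rotM_apply, refM_apply, neg_neg]

@[simp] lemma phi_sr0 (p : ZMod b × ZMod b) :
    phi b (.sr 0) (.ofAdd p) = .ofAdd (p.2, p.1) := by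
  show (refM b * (rotM b) ^ (0 : ZMod 4).val) (.ofAdd p) = _
  have h : (0 : ZMod 4).val = 0 := rfl
  rw [h]
  simp only [pow_zero, mul_one, refM_apply]

@[simp] lemma phi_sr1 (p : ZMod b × ZMod b) :
    phi b (.sr 1) (.ofAdd p) = .ofAdd (p.1, -p.2) := by
  show (refM b * (rotM b) ^ (1 : ZMod 4).val) (.ofAdd p) = _
  have h : (1 : ZMod 4).val = 1 := rfl
  rw [h]
  simp only [pow_one, MulAut.mul_apply, rotM_apply, refM_apply]

@[simp] lemma phi_r1 (p : ZMod b × ZMod b) :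
    phi b (.r 1) (.ofAdd p) = .ofAdd (-p.2, p.1) := by
  show ((rotM b) ^ (1 : ZMod 4).val) (.ofAdd p) = _
  have h : (1 : ZMod 4).val = 1 := rfl
  rw [h]
  simp only [pow_one, rotM_apply]

@[simp] lemma phi_r2 (p : ZMod b × ZMod b) :
    phi b (.r 2) (.ofAdd p) = .ofAdd (-p.1, -p.2) := by
  show ((rotM b) ^ (2 : ZMod 4).val) (.ofAdd p) = _
  have h : (2 : ZMod 4).val = 2 := rfl
  rw [h]
  simp only [pow_succ, pow_zero, one_mul, MulAut.mul_apply, rotM_apply, neg_neg]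

end Gens
section Comp

variable (b : ℕ)

open DihedralGroup SemidirectProduct

@[simp] lemma V_mul (x y : ZMod b × ZMod b) :
    (Multiplicative.ofAdd x * Multiplicative.ofAdd y : V b) = .ofAdd (x + y) := rfl

lemma V_one : (1 : V b) = .ofAdd (0, 0) := rfl

lemma GG_mk_mul (n m : V b) (d e : DihedralGroup 4) :
    (⟨n, d⟩ * ⟨m, e⟩ : GG b) = ⟨n * phi b d m, d * e⟩ := rfl

lemma GG_one : (1 : GG b) = ⟨.ofAdd (0, 0), .r 0⟩ := rfl

lemma L_R0sq : R0 b * R0 b = 1 := by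
  rw [R0, GG_mk_mul, GG_one]
  congr 1
  simp

lemma L_R1sq : R1 b * R1 b = 1 := by
  rw [R1, GG_mk_mul, GG_one]
  congr 1
  simp

lemma L_R2sq : R2 b * R2 b = 1 := by
  rw [R2, GG_mk_mul, GG_one]
  congr 1
  simp

lemma L_R01 : R0 b * R1 b = ⟨.ofAdd (1, 0), .r 1⟩ := by
  rw [R0, R1, GG_mk_mul]
  congr 1
  simp

lemma L_R01sq : (⟨.ofAdd (1, 0), .r 1⟩ : GG b) * ⟨.ofAdd (1, 0), .r 1⟩ = ⟨.ofAdd (1, 1), .r 2⟩ := by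
  rw [GG_mk_mul]
  congr 1
  simp

lemma L_r2sq (x y : ZMod b) : (⟨.ofAdd (x, y), .r 2⟩ : GG b) * ⟨.ofAdd (x, y), .r 2⟩ = 1 := by
  rw [GG_mk_mul, GG_one]
  congr 1
  simp

lemma L_R02 : R0 b * R2 b = ⟨.ofAdd (1, 0), .r 2⟩ := by
  rw [R0, R2, GG_mk_mul]
  congr 1
  simp

lemma L_R12 : R1 b * R2 b = ⟨.ofAdd (0, 0), .r 1⟩ := by
  rw [R1, R2, GG_mk_mul]
  congr 1
  simp

lemma L_R12sq : (⟨.ofAdd (0, 0), .r 1⟩ : GG b) * ⟨.ofAdd (0, 0), .r 1⟩ = ⟨.ofAdd (0, 0), .r 2⟩ := by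
  rw [GG_mk_mul]
  congr 1
  simp

lemma L_T : R1 b * R0 b * R1 b * R2 b = ⟨.ofAdd (0, 1), .r 0⟩ := by
  rw [R0, R1, R2, GG_mk_mul, GG_mk_mul, GG_mk_mul]
  congr 1
  simp [Prod.mk_zero_zero]

lemma L_T_inl : (⟨.ofAdd (0, 1), .r 0⟩ : GG b) = inl (.ofAdd (0, 1)) := rfl

lemma L_T_pow : (⟨.ofAdd (0, 1), .r 0⟩ : GG b) ^ b = 1 := by
  rw [L_T_inl, ← map_pow]
  have : ((Multiplicative.ofAdd ((0 : ZMod b), (1 : ZMod b))) ^ b) = (1 : V b) := by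
    rw [← ofAdd_nsmul, V_one]
    congr 1
    rw [Prod.smul_mk]
    congr 1
    · simp
    · simp [nsmul_eq_mul]
  rw [this, map_one]

end Comp
section Orders

open DihedralGroup SemidirectProduct

lemma ord4 {G : Type*} [Group G] (x : G) (h2 : x ^ 2 ≠ 1) (h4 : x ^ 4 = 1) :
    orderOf x = 4 := by
  have h := orderOf_eq_prime_pow (x := x) (p := 2) (n := 1)
    (by rw [pow_one]; exact h2) (by rw [show (2:ℕ)^(1+1) = 4 from rfl]; exact h4)
  rw [h]; norm_num

variable (b : ℕ)

lemma ord_R0 : orderOf (R0 b) = 2 := by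
  refine orderOf_eq_prime (by rw [pow_two, L_R0sq]) ?_
  intro h
  have := congrArg SemidirectProduct.right h
  exact absurd (show DihedralGroup.sr (3 : ZMod 4) = DihedralGroup.r 0 from this) (by decide)

lemma ord_R1 : orderOf (R1 b) = 2 := by
  refine orderOf_eq_prime (by rw [pow_two, L_R1sq]) ?_
  intro h
  have := congrArg SemidirectProduct.right h
  exact absurd (show DihedralGroup.sr (0 : ZMod 4) = DihedralGroup.r 0 from this) (by decide)

lemma ord_R2 : orderOf (R2 b) = 2 := by
  refine orderOf_eq_prime (by rw [pow_two, L_R2sq]) ?_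
  intro h
  have := congrArg SemidirectProduct.right h
  exact absurd (show DihedralGroup.sr (1 : ZMod 4) = DihedralGroup.r 0 from this) (by decide)

lemma ord_R02 : orderOf (R0 b * R2 b) = 2 := by
  rw [L_R02]
  refine orderOf_eq_prime (by rw [pow_two, L_r2sq]) ?_
  intro h
  have := congrArg SemidirectProduct.right h
  exact absurd (show DihedralGroup.r (2 : ZMod 4) = DihedralGroup.r 0 from this) (by decide)

lemma ord_R01 : orderOf (R0 b * R1 b) = 4 := by
  rw [L_R01]
  refine ord4 _ ?_ ?_
  · rw [pow_two, L_R01sq]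
    intro h
    have := congrArg SemidirectProduct.right h
    exact absurd (show DihedralGroup.r (2 : ZMod 4) = DihedralGroup.r 0 from this) (by decide)
  · rw [pow_succ, pow_succ, pow_succ, pow_one, mul_assoc, L_R01sq, L_r2sq]

lemma ord_R12 : orderOf (R1 b * R2 b) = 4 := by
  rw [L_R12]
  refine ord4 _ ?_ ?_
  · rw [pow_two, L_R12sq]
    intro h
    have := congrArg SemidirectProduct.right h
    exact absurd (show DihedralGroup.r (2 : ZMod 4) = DihedralGroup.r 0 from this) (by decide)
  · rw [pow_succ, pow_succ, pow_succ, pow_one, mul_assoc, L_R12sq, L_r2sq]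

lemma ord_T : orderOf (R1 b * R0 b * R1 b * R2 b) = b := by
  rw [L_T, L_T_inl, orderOf_injective (inl : V b →* GG b) inl_injective,
    orderOf_ofAdd_eq_addOrderOf]
  have : addOrderOf ((0, 1) : ZMod b × ZMod b) =
      Nat.lcm (addOrderOf (0 : ZMod b)) (addOrderOf (1 : ZMod b)) := Prod.addOrderOf _
  rw [this, addOrderOf_zero, ZMod.addOrderOf_one, Nat.lcm_one_left]

lemma card_GG : Nat.card (GG b) = 8 * b ^ 2 := by
  have e1 : GG b ≃ (V b) × DihedralGroup 4 :=
    ⟨fun x => (x.left, x.right), fun p => ⟨p.1, p.2⟩, fun x => rfl, fun p => rfl⟩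
  rw [Nat.card_congr e1, Nat.card_prod, Nat.card_congr (Multiplicative.toAdd
    (α := ZMod b × ZMod b)), Nat.card_prod, Nat.card_zmod, DihedralGroup.nat_card]
  ring

end Orders
section WordIds

variable {H : Type*} [Group H]

lemma pcancel {X : H} (h : X * X = 1) (w : H) : X * (X * w) = w := by
  rw [← mul_assoc, h, one_mul]

lemma pcomm {X Z : H} (h : X * Z = Z * X) (w : H) : X * (Z * w) = Z * (X * w) := by
  rw [← mul_assoc, h, mul_assoc]

lemma inv_self {X : H} (h : X * X = 1) : X⁻¹ = X := by
  rw [← mul_one X⁻¹, ← h, ← mul_assoc, inv_mul_cancel, one_mul]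

lemma comm_of_sq {X Z : H} (hX : X * X = 1) (hZ : Z * Z = 1) (h : (X * Z) ^ 2 = 1) :
    X * Z = Z * X := by
  have h2 : (X * Z) * (X * Z) = 1 := by rw [← pow_two]; exact h
  calc X * Z = (X * Z)⁻¹ := (inv_self h2).symm
    _ = Z⁻¹ * X⁻¹ := by rw [mul_inv_rev]
    _ = Z * X := by rw [inv_self hX, inv_self hZ]

lemma sq_swap {X Y : H} (hX : X * X = 1) (hY : Y * Y = 1) (h : (X * Y) ^ 4 = 1) :
    (X * Y) ^ 2 = (Y * X) ^ 2 := by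
  have h2 : (X * Y) ^ 2 * (X * Y) ^ 2 = 1 := by rw [← pow_add]; exact h
  have h3 : ((X * Y) ^ 2)⁻¹ = (Y * X) ^ 2 := by
    rw [← inv_pow, mul_inv_rev, inv_self hX, inv_self hY]
  rw [← h3]
  exact (inv_self h2).symm

lemma braid_pt {X Y : H} (hX : X * X = 1) (hY : Y * Y = 1) (h : (X * Y) ^ 4 = 1) (w : H) :
    Y * (X * (Y * (X * w))) = X * (Y * (X * (Y * w))) := by
  have h2 := sq_swap hX hY h
  have h3 : (Y * X) ^ 2 * w = (X * Y) ^ 2 * w := by rw [h2]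
  simpa only [pow_two, mul_assoc] using h3

lemma braid_end {X Y : H} (hX : X * X = 1) (hY : Y * Y = 1) (h : (X * Y) ^ 4 = 1) :
    Y * (X * (Y * X)) = X * (Y * (X * Y)) := by
  have h2 := (sq_swap hX hY h).symm
  simpa only [pow_two, mul_assoc] using h2

lemma cube_eq_inv {c : H} (h : c ^ 4 = 1) : c ^ 3 = c⁻¹ := by
  apply eq_inv_of_mul_eq_one_left
  rw [← pow_succ]; exact h

lemma p3YZ {Y Z : H} (hY : Y * Y = 1) (hZ : Z * Z = 1) (h : (Y * Z) ^ 4 = 1) (w : H) :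
    Y * (Z * (Y * (Z * (Y * (Z * w))))) = Z * (Y * w) := by
  have h3 := congrArg (· * w) (cube_eq_inv h)
  simp only [pow_succ, pow_zero, one_mul, mul_inv_rev, inv_self hY, inv_self hZ,
    mul_assoc] at h3
  exact h3

variable {X Y Z : H}

lemma w_cs (hY : Y * Y = 1) (hZ : Z * Z = 1) (hYZ : (Y * Z) ^ 4 = 1) :
    (Y * Z) * Y = Y * (Y * Z) ^ 3 := by
  rw [cube_eq_inv hYZ, mul_inv_rev, inv_self hY, inv_self hZ, mul_assoc]

lemma w_conj_s_t (hY : Y * Y = 1) :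
    Y * (Y * X * Y * Z) * Y⁻¹ = X * Y * Z * Y := by
  rw [inv_self hY]
  simp only [mul_assoc, pcancel hY]

lemma w_conj_s_u (hY : Y * Y = 1) :
    Y * (X * Y * Z * Y) * Y⁻¹ = Y * X * Y * Z := by
  rw [inv_self hY]
  simp only [mul_assoc, hY, mul_one]

lemma w_u_def (hX : X * X = 1) (hY : Y * Y = 1) (hZ : Z * Z = 1) :
    (Y * Z) * (Y * X * Y * Z)⁻¹ * (Y * Z)⁻¹ = X * Y * Z * Y := by
  simp only [mul_inv_rev, inv_self hX, inv_self hY, inv_self hZ, mul_assoc,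
    pcancel hY, pcancel hZ]

lemma w_conj_c_t (hX : X * X = 1) (hY : Y * Y = 1) (hZ : Z * Z = 1) :
    (Y * Z) * (Y * X * Y * Z) * (Y * Z)⁻¹ = (X * Y * Z * Y)⁻¹ := by
  rw [← w_u_def hX hY hZ]
  simp only [mul_inv_rev, inv_inv, mul_assoc]

lemma w_B' (hX : X * X = 1) (hY : Y * Y = 1) (hZ : Z * Z = 1)
    (hYZ : (Y * Z) ^ 4 = 1) (hXZ : (X * Z) ^ 2 = 1) :
    ((Y * Z) * (Y * Z)) * (Y * X * Y * Z) * ((Y * Z) * (Y * Z))⁻¹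
    = (Y * X * Y * Z)⁻¹ := by
  have hxzc := comm_of_sq hX hZ hXZ
  simp only [mul_inv_rev, inv_self hY, inv_self hZ, inv_self hX, mul_assoc,
    pcancel hY, pcancel hZ]
  rw [pcomm hxzc]
  rw [p3YZ hY hZ hYZ]

lemma w_conj_c_u (hX : X * X = 1) (hY : Y * Y = 1) (hZ : Z * Z = 1)
    (hYZ : (Y * Z) ^ 4 = 1) (hXZ : (X * Z) ^ 2 = 1) :
    (Y * Z) * (X * Y * Z * Y) * (Y * Z)⁻¹ = Y * X * Y * Z := by
  have h5 := w_u_def (X := X) (Y := Y) (Z := Z) hX hY hZ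
  have h7 := w_B' (X := X) (Y := Y) (Z := Z) hX hY hZ hYZ hXZ
  rw [← h5]
  have hgp : (Y * Z) * ((Y * Z) * (Y * X * Y * Z)⁻¹ * (Y * Z)⁻¹) * (Y * Z)⁻¹
      = (((Y * Z) * (Y * Z)) * (Y * X * Y * Z) * ((Y * Z) * (Y * Z))⁻¹)⁻¹ := by
    group
  rw [hgp, h7, inv_inv]

lemma w_comm_tu (hX : X * X = 1) (hY : Y * Y = 1) (hZ : Z * Z = 1)
    (hXY : (X * Y) ^ 4 = 1) (hYZ : (Y * Z) ^ 4 = 1) (hXZ : (X * Z) ^ 2 = 1) :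
    (Y * X * Y * Z) * (X * Y * Z * Y) = (X * Y * Z * Y) * (Y * X * Y * Z) := by
  have hxzc := comm_of_sq hX hZ hXZ
  have hAA : (X * (Y * Z)) * (X * (Y * Z)) = X * (Y * (X * (Z * (Y * Z)))) := by
    simp only [mul_assoc]
    rw [← pcomm hxzc]
  have aux : Y * ((X * (Y * Z)) * (X * (Y * Z))) = ((X * (Y * Z)) * (X * (Y * Z))) * Y := by
    rw [hAA, braid_pt hX hY hXY, ← braid_end hY hZ hYZ]
    simp only [mul_assoc]
  have ht : Y * X * Y * Z = Y * (X * (Y * Z)) := by simp only [mul_assoc]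
  have hu : X * Y * Z * Y = (X * (Y * Z)) * Y := by simp only [mul_assoc]
  rw [ht, hu]
  calc (Y * (X * (Y * Z))) * ((X * (Y * Z)) * Y)
      = (Y * ((X * (Y * Z)) * (X * (Y * Z)))) * Y := by simp only [mul_assoc]
    _ = (((X * (Y * Z)) * (X * (Y * Z))) * Y) * Y := by rw [aux]
    _ = ((X * (Y * Z)) * (X * (Y * Z))) * (Y * Y) := by rw [mul_assoc]
    _ = (X * (Y * Z)) * (X * (Y * Z)) := by rw [hY, mul_one]
    _ = (X * (Y * Z)) * ((Y * Y) * (X * (Y * Z))) := by rw [hY, one_mul]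
    _ = ((X * (Y * Z)) * Y) * (Y * (X * (Y * Z))) := by simp only [mul_assoc]

lemma w_E (hX : X * X = 1) (hY : Y * Y = 1) (hZ : Z * Z = 1) (hYZ : (Y * Z) ^ 4 = 1) :
    (X * Y * Z * Y) * (Y * (Y * Z) ^ 3) = X := by
  rw [cube_eq_inv hYZ, mul_inv_rev, inv_self hY, inv_self hZ]
  simp only [mul_assoc, pcancel hY, pcancel hZ, hY, mul_one]

end WordIds
section Pcyc

variable {M : Type*} [Monoid M] {n : ℕ} [NeZero n]

/-- hom out of `(ZMod n)²` determined by two commuting elements of order dividing n -/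
def pcyc (u t : M) (hu : u ^ n = 1) (ht : t ^ n = 1) (hc : t * u = u * t) :
    Multiplicative (ZMod n × ZMod n) →* M where
  toFun v := u ^ v.toAdd.1.val * t ^ v.toAdd.2.val
  map_one' := by
    show u ^ (0 : ZMod n).val * t ^ (0 : ZMod n).val = 1
    rw [ZMod.val_zero, pow_zero, pow_zero, one_mul]
  map_mul' v w := by
    show u ^ ((v.toAdd + w.toAdd).1).val * t ^ ((v.toAdd + w.toAdd).2).val =
      (u ^ v.toAdd.1.val * t ^ v.toAdd.2.val) * (u ^ w.toAdd.1.val * t ^ w.toAdd.2.val)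
    rw [Prod.fst_add, Prod.snd_add, pow_val_add u hu, pow_val_add t ht]
    have hut : Commute u t := hc.symm
    have hcomm : Commute (u ^ w.toAdd.1.val) (t ^ v.toAdd.2.val) := hut.pow_pow _ _
    exact hcomm.mul_mul_mul_comm _ _

lemma pcyc_apply (u t : M) (hu : u ^ n = 1) (ht : t ^ n = 1) (hc : t * u = u * t)
    (p : ZMod n × ZMod n) :
    pcyc u t hu ht hc (.ofAdd p) = u ^ p.1.val * t ^ p.2.val := rfl

lemma pcyc_e1 [Fact (1 < n)] (u t : M) (hu : u ^ n = 1) (ht : t ^ n = 1)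
    (hc : t * u = u * t) :
    pcyc u t hu ht hc (.ofAdd (1, 0)) = u := by
  rw [pcyc_apply, ZMod.val_zero, ZMod.val_one, pow_one, pow_zero, mul_one]

lemma pcyc_e2 [Fact (1 < n)] (u t : M) (hu : u ^ n = 1) (ht : t ^ n = 1)
    (hc : t * u = u * t) :
    pcyc u t hu ht hc (.ofAdd (0, 1)) = t := by
  rw [pcyc_apply, ZMod.val_zero, ZMod.val_one, pow_one, pow_zero, one_mul]

lemma vgen (v : Multiplicative (ZMod n × ZMod n)) :
    v = (Multiplicative.ofAdd ((1 : ZMod n), (0 : ZMod n))) ^ (v.toAdd.1.val) *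
      (Multiplicative.ofAdd ((0 : ZMod n), (1 : ZMod n))) ^ (v.toAdd.2.val) := by
  apply Multiplicative.toAdd.injective
  rw [toAdd_mul, toAdd_pow, toAdd_pow, toAdd_ofAdd, toAdd_ofAdd]
  rw [Prod.smul_mk, Prod.smul_mk]
  rw [smul_zero, smul_zero, Prod.mk_add_mk, add_zero, zero_add]
  rw [nsmul_eq_mul, nsmul_eq_mul, mul_one, mul_one, ZMod.natCast_val, ZMod.natCast_val,
    ZMod.cast_id, ZMod.cast_id]

lemma pcyc_ext {f g : Multiplicative (ZMod n × ZMod n) →* M}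
    (h1 : f (.ofAdd (1, 0)) = g (.ofAdd (1, 0))) (h2 : f (.ofAdd (0, 1)) = g (.ofAdd (0, 1))) :
    f = g := by
  refine MonoidHom.ext fun v => ?_
  rw [vgen v, map_mul, map_mul, map_pow, map_pow, map_pow, map_pow, h1, h2]

lemma pow_val_neg {G : Type*} [Group G] {n : ℕ} [NeZero n] (a : G) (h : a ^ n = 1)
    (x : ZMod n) : a ^ (-x).val = (a ^ x.val)⁻¹ := by
  apply eq_inv_of_mul_eq_one_left
  rw [← pow_val_add a h, neg_add_cancel, ZMod.val_zero, pow_zero]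

lemma conjpow {G : Type*} [Group G] (a x : G) (n : ℕ) :
    (a * x * a⁻¹) ^ n = a * x ^ n * a⁻¹ := by
  rw [← MulAut.conj_apply, ← map_pow, MulAut.conj_apply]

end Pcyc
namespace Stmt5

def r0 : FreeGroup (Fin 3) := FreeGroup.of 0
def r1 : FreeGroup (Fin 3) := FreeGroup.of 1
def r2 : FreeGroup (Fin 3) := FreeGroup.of 2

/-- The relations of the presented group `M1` of Proposition 2.3. -/
def rels (b : ℕ) : Set (FreeGroup (Fin 3)) :=
  {r0 ^ 2, r1 ^ 2, r2 ^ 2, (r0 * r1) ^ 4, (r1 * r2) ^ 4, (r0 * r2) ^ 2,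
   (r1 * r0 * r1 * r2) ^ b}

/-- The image of the `i`-th generator in `M1`. -/
def g (b : ℕ) (i : Fin 3) : PresentedGroup (rels b) := PresentedGroup.of i

section Aux

variable (b : ℕ)

lemma relP {w : FreeGroup (Fin 3)} (hw : w ∈ rels b) :
    PresentedGroup.mk (rels b) w = 1 := by
  apply (QuotientGroup.eq_one_iff w).2
  exact Subgroup.subset_normalClosure hw

lemma hX2 : g b 0 * g b 0 = 1 := by
  have h := relP b (show r0 ^ 2 ∈ rels b by simp [rels])
  rw [map_pow, pow_two] at h
  exact h

lemma hY2 : g b 1 * g b 1 = 1 := by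
  have h := relP b (show r1 ^ 2 ∈ rels b by simp [rels])
  rw [map_pow, pow_two] at h
  exact h

lemma hZ2 : g b 2 * g b 2 = 1 := by
  have h := relP b (show r2 ^ 2 ∈ rels b by simp [rels])
  rw [map_pow, pow_two] at h
  exact h

lemma hXY4 : (g b 0 * g b 1) ^ 4 = 1 := by
  have h := relP b (show (r0 * r1) ^ 4 ∈ rels b by simp [rels])
  rw [map_pow, map_mul] at h
  exact h

lemma hYZ4 : (g b 1 * g b 2) ^ 4 = 1 := by
  have h := relP b (show (r1 * r2) ^ 4 ∈ rels b by simp [rels])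
  rw [map_pow, map_mul] at h
  exact h

lemma hXZ2 : (g b 0 * g b 2) ^ 2 = 1 := by
  have h := relP b (show (r0 * r2) ^ 2 ∈ rels b by simp [rels])
  rw [map_pow, map_mul] at h
  exact h

lemma hTb : (g b 1 * g b 0 * g b 1 * g b 2) ^ b = 1 := by
  have h := relP b (show (r1 * r0 * r1 * r2) ^ b ∈ rels b by simp [rels])
  rw [map_pow, map_mul, map_mul, map_mul] at h
  exact h

def cP : PresentedGroup (rels b) := g b 1 * g b 2
def sP : PresentedGroup (rels b) := g b 1
def tP : PresentedGroup (rels b) := g b 1 * g b 0 * g b 1 * g b 2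
def uP : PresentedGroup (rels b) := g b 0 * g b 1 * g b 2 * g b 1

lemma hc4 : cP b ^ 4 = 1 := hYZ4 b
lemma hs2 : sP b * sP b = 1 := hY2 b
lemma hcs : cP b * sP b = sP b * cP b ^ 3 := w_cs (hY2 b) (hZ2 b) (hYZ4 b)

def fD : DihedralGroup 4 →* PresentedGroup (rels b) where
  toFun := dlift (cP b) (sP b)
  map_one' := by
    show cP b ^ (0 : ZMod 4).val = 1
    rw [show (0 : ZMod 4).val = 0 from rfl, pow_zero]
  map_mul' := dlift_mul _ _ (hc4 b) (hs2 b) (hcs b)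

lemma fD_r (i : ZMod 4) : fD b (.r i) = cP b ^ i.val := rfl
lemma fD_sr (i : ZMod 4) : fD b (.sr i) = sP b * cP b ^ i.val := rfl

lemma huconj : cP b * (tP b)⁻¹ * (cP b)⁻¹ = uP b :=
  w_u_def (hX2 b) (hY2 b) (hZ2 b)

lemma htb : tP b ^ b = 1 := hTb b

lemma hub : uP b ^ b = 1 := by
  rw [← huconj b, conjpow, inv_pow, htb, inv_one, mul_one, mul_inv_cancel]

lemma hcommtu : tP b * uP b = uP b * tP b :=
  w_comm_tu (hX2 b) (hY2 b) (hZ2 b) (hXY4 b) (hYZ4 b) (hXZ2 b)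

def fN [NeZero b] : V b →* PresentedGroup (rels b) :=
  pcyc (uP b) (tP b) (hub b) (htb b) (hcommtu b)

lemma conj_c_u : cP b * uP b * (cP b)⁻¹ = tP b :=
  w_conj_c_u (hX2 b) (hY2 b) (hZ2 b) (hYZ4 b) (hXZ2 b)

lemma conj_c_t : cP b * tP b * (cP b)⁻¹ = (uP b)⁻¹ :=
  w_conj_c_t (hX2 b) (hY2 b) (hZ2 b)

lemma conj_s_t : sP b * tP b * (sP b)⁻¹ = uP b :=
  w_conj_s_t (hY2 b)

lemma conj_s_u : sP b * uP b * (sP b)⁻¹ = tP b :=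
  w_conj_s_u (hY2 b)

variable [NeZero b] [Fact (1 < b)]

lemma fN_e1 : fN b (.ofAdd (1, 0)) = uP b := pcyc_e1 _ _ _ _ _
lemma fN_e2 : fN b (.ofAdd (0, 1)) = tP b := pcyc_e2 _ _ _ _ _

lemma fN_ne1 : fN b (.ofAdd (-1, 0)) = (uP b)⁻¹ := by
  show uP b ^ ((-1 : ZMod b)).val * tP b ^ (0 : ZMod b).val = _
  rw [ZMod.val_zero, pow_zero, mul_one, pow_val_neg _ (hub b), ZMod.val_one, pow_one]

lemma stepRot : ∀ v : V b, fN b (rotM b v) = cP b * fN b v * (cP b)⁻¹ := by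
  have h : (fN b).comp (rotM b).toMonoidHom =
      (MulAut.conj (cP b)).toMonoidHom.comp (fN b) := by
    apply pcyc_ext
    · show fN b (rotM b (.ofAdd (1, 0))) = MulAut.conj (cP b) (fN b (.ofAdd (1, 0)))
      rw [rotM_apply, MulAut.conj_apply, fN_e1]
      show fN b (.ofAdd (-(0 : ZMod b), 1)) = _
      rw [neg_zero, fN_e2, conj_c_u]
    · show fN b (rotM b (.ofAdd (0, 1))) = MulAut.conj (cP b) (fN b (.ofAdd (0, 1)))
      rw [rotM_apply, MulAut.conj_apply, fN_e2]
      show fN b (.ofAdd (-(1 : ZMod b), 0)) = _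
      rw [fN_ne1]
      exact (conj_c_t b).symm
  intro v
  have := DFunLike.congr_fun h v
  simpa [MulAut.conj_apply] using this

lemma stepRef : ∀ v : V b, fN b (refM b v) = sP b * fN b v * (sP b)⁻¹ := by
  have h : (fN b).comp (refM b).toMonoidHom =
      (MulAut.conj (sP b)).toMonoidHom.comp (fN b) := by
    apply pcyc_ext
    · show fN b (refM b (.ofAdd (1, 0))) = MulAut.conj (sP b) (fN b (.ofAdd (1, 0)))
      rw [refM_apply, MulAut.conj_apply, fN_e1]
      show fN b (.ofAdd ((0 : ZMod b), 1)) = _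
      rw [fN_e2, conj_s_u]
    · show fN b (refM b (.ofAdd (0, 1))) = MulAut.conj (sP b) (fN b (.ofAdd (0, 1)))
      rw [refM_apply, MulAut.conj_apply, fN_e2]
      show fN b (.ofAdd ((1 : ZMod b), 0)) = _
      rw [fN_e1, conj_s_t]
  intro v
  have := DFunLike.congr_fun h v
  simpa [MulAut.conj_apply] using this

lemma Hrotk : ∀ (k : ℕ) (v : V b),
    fN b ((rotM b ^ k) v) = cP b ^ k * fN b v * (cP b ^ k)⁻¹ := by
  intro k
  induction k with
  | zero => intro v; simp
  | succ k ih =>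
      intro v
      rw [pow_succ, MulAut.mul_apply, ih, stepRot]
      group

lemma compat : ∀ dg : DihedralGroup 4,
    (fN b).comp ((phi b dg).toMonoidHom) =
      (MulAut.conj (fD b dg)).toMonoidHom.comp (fN b) := by
  intro dg
  refine MonoidHom.ext fun v => ?_
  cases dg with
  | r i =>
      show fN b ((rotM b ^ i.val) v) = MulAut.conj (cP b ^ i.val) (fN b v)
      rw [MulAut.conj_apply, Hrotk]
  | sr i =>
      show fN b ((refM b) ((rotM b ^ i.val) v)) =
        MulAut.conj (sP b * cP b ^ i.val) (fN b v)
      rw [stepRef, Hrotk, MulAut.conj_apply]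
      group

def psiH : GG b →* PresentedGroup (rels b) :=
  SemidirectProduct.lift (fN b) (fD b) (compat b)

def fgen : Fin 3 → GG b
  | 0 => R0 b
  | 1 => R1 b
  | 2 => R2 b

lemma relsat : ∀ r ∈ rels b, FreeGroup.lift (fgen b) r = 1 := by
  intro r hr
  simp only [rels, Set.mem_insert_iff, Set.mem_singleton_iff] at hr
  rcases hr with rfl | rfl | rfl | rfl | rfl | rfl | rfl
  · rw [map_pow]
    simp only [r0, FreeGroup.lift_apply_of]
    show R0 b ^ 2 = 1
    rw [pow_two, L_R0sq]
  · rw [map_pow]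
    simp only [r1, FreeGroup.lift_apply_of]
    show R1 b ^ 2 = 1
    rw [pow_two, L_R1sq]
  · rw [map_pow]
    simp only [r2, FreeGroup.lift_apply_of]
    show R2 b ^ 2 = 1
    rw [pow_two, L_R2sq]
  · rw [map_pow, map_mul]
    simp only [r0, r1, FreeGroup.lift_apply_of]
    show (R0 b * R1 b) ^ 4 = 1
    rw [L_R01, pow_succ, pow_succ, pow_succ, pow_one, mul_assoc, L_R01sq, L_r2sq]
  · rw [map_pow, map_mul]
    simp only [r1, r2, FreeGroup.lift_apply_of]
    show (R1 b * R2 b) ^ 4 = 1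
    rw [L_R12, pow_succ, pow_succ, pow_succ, pow_one, mul_assoc, L_R12sq, L_r2sq]
  · rw [map_pow, map_mul]
    simp only [r0, r2, FreeGroup.lift_apply_of]
    show (R0 b * R2 b) ^ 2 = 1
    rw [pow_two, L_R02, L_r2sq]
  · rw [map_pow, map_mul, map_mul, map_mul]
    simp only [r0, r1, r2, FreeGroup.lift_apply_of]
    show (R1 b * R0 b * R1 b * R2 b) ^ b = 1
    rw [L_T, L_T_pow]

def piH : PresentedGroup (rels b) →* GG b := PresentedGroup.toGroup (relsat b)

lemma piH_of (i : Fin 3) : piH b (g b i) = fgen b i := PresentedGroup.toGroup.of (relsat b)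

lemma psipiH : ∀ x, psiH b (piH b x) = x := by
  have hcomp : (psiH b).comp (piH b) = MonoidHom.id _ := by
    apply PresentedGroup.ext
    intro i
    rw [MonoidHom.comp_apply, MonoidHom.id_apply]
    have h1 : piH b (PresentedGroup.of i) = fgen b i := piH_of b i
    rw [h1]
    fin_cases i
    · show fN b (.ofAdd (1, 0)) * fD b (.sr 3) = g b 0
      rw [fN_e1, fD_sr, show ((3 : ZMod 4)).val = 3 from rfl]
      exact w_E (hX2 b) (hY2 b) (hZ2 b) (hYZ4 b)
    · show fN b (.ofAdd (0, 0)) * fD b (.sr 0) = g b 1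
      rw [show (Multiplicative.ofAdd ((0 : ZMod b), (0 : ZMod b))) = (1 : V b) from rfl,
        map_one, one_mul, fD_sr, show ((0 : ZMod 4)).val = 0 from rfl, pow_zero, mul_one]
      rfl
    · show fN b (.ofAdd (0, 0)) * fD b (.sr 1) = g b 2
      rw [show (Multiplicative.ofAdd ((0 : ZMod b), (0 : ZMod b))) = (1 : V b) from rfl,
        map_one, one_mul, fD_sr, show ((1 : ZMod 4)).val = 1 from rfl, pow_one]
      exact pcancel (hY2 b) (g b 2)
  intro x
  exact DFunLike.congr_fun hcomp x

lemma injH : Function.Injective (piH b) := by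
  intro x y hxy
  rw [← psipiH b x, hxy, psipiH b y]

lemma surjH : Function.Surjective (piH b) := by
  have hsr0 : SemidirectProduct.inr (DihedralGroup.sr 0) ∈ (piH b).range :=
    ⟨g b 1, piH_of b 1⟩
  have hr1 : SemidirectProduct.inr (DihedralGroup.r 1) ∈ (piH b).range := by
    refine ⟨g b 1 * g b 2, ?_⟩
    rw [map_mul, piH_of, piH_of]
    show R1 b * R2 b = _
    rw [L_R12]
    rfl
  have hri : ∀ i : ZMod 4, SemidirectProduct.inr (DihedralGroup.r i) ∈ (piH b).range := by
    intro i
    have heq : (SemidirectProduct.inr (DihedralGroup.r i) : GG b) =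
        (SemidirectProduct.inr (DihedralGroup.r 1)) ^ i.val := by
      rw [← map_pow, DihedralGroup.r_one_pow]
      congr 1
      rw [ZMod.natCast_val, ZMod.cast_id]
    rw [heq]
    exact pow_mem hr1 _
  have hinr : ∀ d : DihedralGroup 4, SemidirectProduct.inr d ∈ (piH b).range := by
    intro d
    cases d with
    | r i => exact hri i
    | sr i =>
        have heq : (SemidirectProduct.inr (DihedralGroup.sr i) : GG b) =
            SemidirectProduct.inr (DihedralGroup.sr 0) *
              SemidirectProduct.inr (DihedralGroup.r i) := by
          rw [← map_mul, DihedralGroup.sr_mul_r, zero_add]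
        rw [heq]
        exact mul_mem hsr0 (hri i)
  have hTmem : (SemidirectProduct.inl (.ofAdd ((0 : ZMod b), (1 : ZMod b))) : GG b)
      ∈ (piH b).range := by
    refine ⟨g b 1 * g b 0 * g b 1 * g b 2, ?_⟩
    rw [map_mul, map_mul, map_mul, piH_of, piH_of, piH_of]
    show R1 b * R0 b * R1 b * R2 b = _
    rw [L_T]
    rfl
  have hE1mem : (SemidirectProduct.inl (.ofAdd ((1 : ZMod b), (0 : ZMod b))) : GG b)
      ∈ (piH b).range := by
    have heq' : SemidirectProduct.inr (DihedralGroup.r 1) *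
          SemidirectProduct.inl (.ofAdd ((0 : ZMod b), (1 : ZMod b))) *
          SemidirectProduct.inr (DihedralGroup.r 1)⁻¹ =
        (SemidirectProduct.inl (.ofAdd ((-1 : ZMod b), (0 : ZMod b))) : GG b) := by
      rw [← SemidirectProduct.inl_aut]
      congr 1
    have hM : (SemidirectProduct.inl (.ofAdd ((-1 : ZMod b), (0 : ZMod b))) : GG b)
        ∈ (piH b).range := by
      rw [← heq']
      exact mul_mem (mul_mem (hinr _) hTmem) (hinr _)
    have h2 : (SemidirectProduct.inl (.ofAdd ((1 : ZMod b), (0 : ZMod b))) : GG b) =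
        (SemidirectProduct.inl (.ofAdd ((-1 : ZMod b), (0 : ZMod b))))⁻¹ := by
      rw [← map_inv]
      congr 1
      show _ = Multiplicative.ofAdd (-((-1 : ZMod b), (0 : ZMod b)))
      rw [Prod.neg_mk, neg_neg, neg_zero]
    rw [h2]
    exact inv_mem hM
  have hinl : ∀ v : V b, SemidirectProduct.inl v ∈ (piH b).range := by
    intro v
    rw [vgen v, map_mul, map_pow, map_pow]
    exact mul_mem (pow_mem hE1mem _) (pow_mem hTmem _)
  intro w
  have hw : w ∈ (piH b).range := by
    rw [← SemidirectProduct.inl_left_mul_inr_right w]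
    exact mul_mem (hinl _) (hinr _)
  exact hw

end Aux

/-- Proposition 2.3, group `M1`: it has order `8 b^2` and the listed exponents
are the true orders. -/
theorem stmt_5 (b : ℕ) (hb : 2 ≤ b) :
    Nat.card (PresentedGroup (rels b)) = 8 * b ^ 2 ∧
    orderOf (g b 0) = 2 ∧ orderOf (g b 1) = 2 ∧ orderOf (g b 2) = 2 ∧
    orderOf (g b 0 * g b 2) = 2 ∧
    orderOf (g b 0 * g b 1) = 4 ∧ orderOf (g b 1 * g b 2) = 4 ∧
    orderOf (g b 1 * g b 0 * g b 1 * g b 2) = b := by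
  haveI : NeZero b := ⟨by omega⟩
  haveI : Fact (1 < b) := ⟨by omega⟩
  have hinj := injH b
  have hbij : Function.Bijective (piH b) := ⟨hinj, surjH b⟩
  refine ⟨?_, ?_, ?_, ?_, ?_, ?_, ?_, ?_⟩
  · rw [Nat.card_eq_of_bijective _ hbij, card_GG]
  · rw [← orderOf_injective (piH b) hinj (g b 0), piH_of]
    exact ord_R0 b
  · rw [← orderOf_injective (piH b) hinj (g b 1), piH_of]
    exact ord_R1 b
  · rw [← orderOf_injective (piH b) hinj (g b 2), piH_of]
    exact ord_R2 b
  · rw [← orderOf_injective (piH b) hinj _, map_mul, piH_of, piH_of]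
    exact ord_R02 b
  · rw [← orderOf_injective (piH b) hinj _, map_mul, piH_of, piH_of]
    exact ord_R01 b
  · rw [← orderOf_injective (piH b) hinj _, map_mul, piH_of, piH_of]
    exact ord_R12 b
  · rw [← orderOf_injective (piH b) hinj _, map_mul, map_mul, map_mul,
      piH_of, piH_of, piH_of]
    exact ord_T b

end Stmt5
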